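/- arXiv:1709.04809 — 9 statements merged into one kernel-verified Lean document; each statement's English description precedes it below -/
import Mathlib

section
/- Programs P1 and P2 are equivalent with respect to the output value of x: for all integers a, b, x, y, x1, y1, x2, y2, if s11(a,b,x,y,x1,y1) and s21(a,b,x,y,x2,y2) both hold, then x1 = x2. -/
/-- CHC encoding of the loop of program P1. -/
inductive s12 : ℤ → ℤ → ℤ → ℤ → ℤ → ℤ → ℤ → ℤ → Prop
  | base (a b x y : ℤ) (h : a ≥ b) : s12 a b x y a b x y
  | step (a b x y a2 b2 x2 y2 : ℤ) (h : a ≤ b - 1)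
      (ih : s12 (a + 1) b (x + a) (y + x + a) a2 b2 x2 y2) :
      s12 a b x y a2 b2 x2 y2

/-- CHC encoding of the loop of program P2. -/
inductive s23 : ℤ → ℤ → ℤ → ℤ → ℤ → ℤ → ℤ → ℤ → Prop
  | base (a b x y : ℤ) (h : a ≥ b - 1) : s23 a b x y (a + 1) b x (y + x)
  | step (a b x y a2 b2 x2 y2 : ℤ) (h : a ≤ b - 2)
      (ih : s23 (a + 1) b (x + a + 1) (y + x) a2 b2 x2 y2) :
      s23 a b x y a2 b2 x2 y2

/-- CHC encoding of the body of program P2. -/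
def s22 (a b x y a2 b2 x2 y2 : ℤ) : Prop :=
  (a ≥ b ∧ a2 = a ∧ b2 = b ∧ x2 = x ∧ y2 = y) ∨
  (a ≤ b - 1 ∧ s23 a b (x + a) y a2 b2 x2 y2)

/-- Input/output relation of program P1. -/
def s11 (a b x y x2 y2 : ℤ) : Prop := ∃ a2 b2, s12 a b x y a2 b2 x2 y2

/-- Input/output relation of program P2. -/
def s21 (a b x y x2 y2 : ℤ) : Prop := ∃ a2 b2, s22 a b x y a2 b2 x2 y2


def T (a b : ℤ) : ℤ := ∑ i ∈ Finset.range (b - a).toNat, (a + (i : ℤ))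

lemma T_base {a b : ℤ} (h : a ≥ b) : T a b = 0 := by
  have : (b - a).toNat = 0 := by omega
  simp [T, this]

lemma T_step {a b : ℤ} (h : a ≤ b - 1) : T a b = a + T (a + 1) b := by
  have hn : (b - a).toNat = (b - (a + 1)).toNat + 1 := by omega
  rw [T, hn, Finset.sum_range_succ']
  rw [T, show (a:ℤ) + ((0:ℕ):ℤ) = a by simp, add_comm]
  congr 1
  apply Finset.sum_congr rfl
  intro i _
  push_cast
  ring

lemma s12_x {a b x y a2 b2 x1 y1 : ℤ} (h : s12 a b x y a2 b2 x1 y1) :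
    x1 = x + T a b := by
  induction h with
  | base a b x y h => rw [T_base h]; ring
  | step a b x y a2 b2 x2 y2 h ih IH =>
      rw [IH, T_step h]; ring

lemma s23_x {a b x y a2 b2 x1 y1 : ℤ} (h : s23 a b x y a2 b2 x1 y1) :
    x1 = x + T (a + 1) b := by
  induction h with
  | base a b x y h => rw [T_base (by omega : a + 1 ≥ b)]; ring
  | step a b x y a2 b2 x2 y2 h ih IH =>
      rw [IH, T_step (by omega : a + 1 ≤ b - 1)]; ring

/-- Programs P1 and P2 are equivalent with respect to the output value of x. -/
theorem P1_P2_equiv_x (a b x y x1 y1 x2 y2 : ℤ)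
    (h1 : s11 a b x y x1 y1) (h2 : s21 a b x y x2 y2) : x1 = x2 := by
  obtain ⟨a2, b2, h1⟩ := h1
  obtain ⟨a2', b2', h2⟩ := h2
  have hx1 := s12_x h1
  rcases h2 with ⟨hge, _, _, hx2, _⟩ | ⟨hlt, h23⟩
  · rw [hx1, T_base hge, hx2]; ring
  · have hx2 := s23_x h23
    rw [hx1, hx2, T_step hlt]; ring
end

section
/- Programs P1 and P2 are equivalent with respect to the output value of y: for all integers a, b, x, y, x1, y1, x2, y2, if s11(a,b,x,y,x1,y1) and s21(a,b,x,y,x2,y2) both hold, then y1 = y2. -/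
lemma s12_det : ∀ a b x y a2 b2 x2 y2, s12 a b x y a2 b2 x2 y2 →
    ∀ a3 b3 x3 y3, s12 a b x y a3 b3 x3 y3 →
    a2 = a3 ∧ b2 = b3 ∧ x2 = x3 ∧ y2 = y3 := by
  intro a b x y a2 b2 x2 y2 h
  induction h with
  | base a b x y h =>
    intro a3 b3 x3 y3 h2
    cases h2 with
    | base => exact ⟨rfl, rfl, rfl, rfl⟩
    | step _ _ _ _ _ _ _ _ h' => omega
  | step a b x y a2 b2 x2 y2 h ih IH =>
    intro a3 b3 x3 y3 h2
    cases h2 with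
    | base _ _ _ _ h' => omega
    | step _ _ _ _ _ _ _ _ h' ih' => exact IH _ _ _ _ ih'

lemma s23_to_s12 : ∀ a b x y a2 b2 x2 y2, s23 a b x y a2 b2 x2 y2 →
    a ≤ b - 1 → s12 a b (x - a) y a2 b2 x2 y2 := by
  intro a b x y a2 b2 x2 y2 h
  induction h with
  | base a b x y h =>
    intro hlt
    apply s12.step _ _ _ _ _ _ _ _ (by omega)
    have : x - a + a = x := by ring
    rw [this]
    have : y + (x - a) + a = y + x := by ring
    rw [this]
    exact s12.base _ _ _ _ (by omega)
  | step a b x y a2 b2 x2 y2 h ih IH =>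
    intro hlt
    apply s12.step _ _ _ _ _ _ _ _ (by omega)
    have e1 : x - a + a = x + a + 1 - (a + 1) := by ring
    have e2 : y + (x - a) + a = y + x := by ring
    rw [e1, e2]
    exact IH (by omega)

/-- Programs P1 and P2 are equivalent with respect to the output value of y. -/
theorem P1_P2_equiv_y (a b x y x1 y1 x2 y2 : ℤ)
    (h1 : s11 a b x y x1 y1) (h2 : s21 a b x y x2 y2) : y1 = y2 := by
  obtain ⟨a2, b2, h1⟩ := h1
  obtain ⟨a3, b3, h2⟩ := h2
  rcases h2 with ⟨hab, ha, hb, hx, hy⟩ | ⟨hab, h23⟩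
  · subst hy
    cases h1 with
    | base => rfl
    | step _ _ _ _ _ _ _ _ h' => omega
  · have h12 := s23_to_s12 _ _ _ _ _ _ _ _ h23 hab
    have e : x + a - a = x := by ring
    rw [e] at h12
    exact (s12_det _ _ _ _ _ _ _ _ h1 _ _ _ _ h12).2.2.2
end

section
/- The paired predicate pp1 introduced by Predicate Pairing with abstraction denotes the empty relation; semantically: for all integers a, b, c, d, e, f, g, h, i, j, k, l, if s12(a,b,c,d,e,f,g,h) and s22(a,b,c,d,i,j,k,l) both hold, then g ≥ k (equivalently, the constraint g ≤ k - 1 together with these two atoms is unsatisfiable). -/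
lemma s12_x_s4 {a b x y e f g h : ℤ} (H : s12 a b x y e f g h) :
    (a ≥ b ∧ g = x) ∨ (a < b ∧ 2*g = 2*x + b*(b-1) - a*(a-1)) := by
  induction H with
  | base a b x y h => exact Or.inl ⟨h, rfl⟩
  | step a b x y a2 b2 x2 y2 h ih IH =>
    rcases IH with ⟨h1, h2⟩ | ⟨h1, h2⟩
    · right
      constructor
      · omega
      · have : b = a + 1 := by omega
        subst this; rw [h2]; ring
    · right
      constructor
      · omega
      · rw [h2]; ring

lemma s23_x_s4 {a b x y e f g h : ℤ} (H : s23 a b x y e f g h) :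
    (a ≥ b - 1 ∧ g = x) ∨ (a < b - 1 ∧ 2*g = 2*x + b*(b-1) - (a+1)*a) := by
  induction H with
  | base a b x y h => exact Or.inl ⟨h, rfl⟩
  | step a b x y a2 b2 x2 y2 h ih IH =>
    rcases IH with ⟨h1, h2⟩ | ⟨h1, h2⟩
    · right
      constructor
      · omega
      · have : a = b - 2 := by omega
        subst this; rw [h2]; ring
    · right
      constructor
      · omega
      · rw [h2]; ring

/-- The paired predicate pp1 denotes the empty relation. -/
theorem pp1_empty (a b c d e f g h i j k l : ℤ)
    (h1 : s12 a b c d e f g h) (h2 : s22 a b c d i j k l) : g ≥ k := by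
  have H1 := s12_x_s4 h1
  rcases h2 with ⟨hab, _, _, hk, _⟩ | ⟨hab, H2⟩
  · rcases H1 with ⟨_, hg⟩ | ⟨hlt, _⟩
    · omega
    · omega
  · have H2' := s23_x_s4 H2
    rcases H1 with ⟨hge, _⟩ | ⟨hlt, hg⟩
    · omega
    · rcases H2' with ⟨hge2, hk⟩ | ⟨hlt2, hk⟩
      · have : a = b - 1 := by omega
        subst this
        nlinarith [hg, hk]
      · nlinarith [hg, hk]
end

section
/- Projection for the domain of convex polyhedra (Fourier–Motzkin elimination): for every polyhedron P in ℝ^(n+1), the image of P under the projection π : (Fin (n+1) → ℝ) → (Fin n → ℝ) that forgets the last coordinate (π x = x ∘ Fin.castSucc) is a polyhedron in ℝ^n. -/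
/-- A polyhedron in `ℝ^n` is a finite intersection of closed half-spaces
`{x | ∑ i, a j i * x i ≤ b j}` (the empty intersection being all of `ℝ^n`). -/
def IsPolyhedron {n : ℕ} (P : Set (Fin n → ℝ)) : Prop :=
  ∃ (J : Type) (_ : Fintype J) (a : J → Fin n → ℝ) (b : J → ℝ),
    P = ⋂ j : J, {x : Fin n → ℝ | ∑ i, a j i * x i ≤ b j}

open Finset in
lemma fm_aux {J : Type} [Fintype J] (c s b : J → ℝ) :
    (∃ t : ℝ, ∀ j, s j + c j * t ≤ b j) ↔
      ((∀ j : {j // c j = 0}, s j.1 ≤ b j.1) ∧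
       ∀ (p : {p // 0 < c p}) (q : {q // c q < 0}),
         c p.1 * s q.1 - c q.1 * s p.1 ≤ c p.1 * b q.1 - c q.1 * b p.1) := by
  classical
  constructor
  · rintro ⟨t, ht⟩
    constructor
    · rintro ⟨j, hj⟩
      have := ht j
      simp only [hj] at this
      linarith
    · rintro ⟨p, hp⟩ ⟨q, hq⟩
      have h1 := ht p
      have h2 := ht q
      nlinarith [mul_le_mul_of_nonneg_left h1 (by linarith : (0:ℝ) ≤ -c q),
        mul_le_mul_of_nonneg_left h2 hp.le]
  · rintro ⟨h0, hcross⟩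
    have hdiv : ∀ (p : {p // 0 < c p}) (q : {q // c q < 0}),
        (b q.1 - s q.1) / c q.1 ≤ (b p.1 - s p.1) / c p.1 := by
      rintro ⟨p, hp⟩ ⟨q, hq⟩
      rw [le_div_iff₀ hp, div_mul_eq_mul_div, div_le_iff_of_neg hq]
      nlinarith [hcross ⟨p, hp⟩ ⟨q, hq⟩]
    obtain ⟨t, hA, hB⟩ : ∃ t : ℝ, (∀ p : {p // 0 < c p}, t ≤ (b p.1 - s p.1) / c p.1) ∧
        (∀ q : {q // c q < 0}, (b q.1 - s q.1) / c q.1 ≤ t) := by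
      by_cases hne : (Finset.univ.image
          (fun p : {p // 0 < c p} => (b p.1 - s p.1) / c p.1)).Nonempty
      · refine ⟨_root_.Finset.min' _ hne, fun p => ?_, fun q => ?_⟩
        · exact Finset.min'_le _ _ (Finset.mem_image_of_mem (fun p : {p // 0 < c p} => (b p.1 - s p.1) / c p.1) (Finset.mem_univ p))
        · have hmem := Finset.min'_mem _ hne
          rw [Finset.mem_image] at hmem
          obtain ⟨p, -, hpval⟩ := hmem
          exact hpval ▸ hdiv p q
      · by_cases hne' : (Finset.univ.image
            (fun q : {q // c q < 0} => (b q.1 - s q.1) / c q.1)).Nonempty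
        · refine ⟨_root_.Finset.max' _ hne', fun p => ?_, fun q => ?_⟩
          · exact absurd ⟨_, Finset.mem_image_of_mem (fun p : {p // 0 < c p} => (b p.1 - s p.1) / c p.1) (Finset.mem_univ p)⟩ hne
          · exact Finset.le_max' _ _ (Finset.mem_image_of_mem (fun q : {q // c q < 0} => (b q.1 - s q.1) / c q.1) (Finset.mem_univ q))
        · refine ⟨0, fun p => ?_, fun q => ?_⟩
          · exact absurd ⟨_, Finset.mem_image_of_mem (fun p : {p // 0 < c p} => (b p.1 - s p.1) / c p.1) (Finset.mem_univ p)⟩ hne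
          · exact absurd ⟨_, Finset.mem_image_of_mem (fun q : {q // c q < 0} => (b q.1 - s q.1) / c q.1) (Finset.mem_univ q)⟩ hne'
    refine ⟨t, fun j => ?_⟩
    rcases lt_trichotomy (c j) 0 with h | h | h
    · have := hB ⟨j, h⟩
      rw [div_le_iff_of_neg h] at this
      linarith
    · have := h0 ⟨j, h⟩
      simp [h]; linarith
    · have := hA ⟨j, h⟩
      rw [le_div_iff₀ h] at this
      linarith

theorem polyhedron_projection' (n : ℕ) (P : Set (Fin (n + 1) → ℝ))
    (hP : ∃ (J : Type) (_ : Fintype J) (a : J → Fin (n+1) → ℝ) (b : J → ℝ),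
      P = ⋂ j : J, {x : Fin (n+1) → ℝ | ∑ i, a j i * x i ≤ b j}) :
    ∃ (J : Type) (_ : Fintype J) (a : J → Fin n → ℝ) (b : J → ℝ),
      ((fun x : Fin (n + 1) → ℝ => x ∘ Fin.castSucc) '' P)
        = ⋂ j : J, {x : Fin n → ℝ | ∑ i, a j i * x i ≤ b j} := by
  classical
  obtain ⟨J, hJ, a, b, rfl⟩ := hP
  refine ⟨{j : J // a j (Fin.last n) = 0} ⊕
      {p : J // 0 < a p (Fin.last n)} × {q : J // a q (Fin.last n) < 0}, inferInstance,
    Sum.elim (fun j i => a j.1 i.castSucc)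
      (fun pq i => a pq.1.1 (Fin.last n) * a pq.2.1 i.castSucc
        - a pq.2.1 (Fin.last n) * a pq.1.1 i.castSucc),
    Sum.elim (fun j => b j.1)
      (fun pq => a pq.1.1 (Fin.last n) * b pq.2.1 - a pq.2.1 (Fin.last n) * b pq.1.1), ?_⟩
  ext y
  simp only [Set.mem_image, Set.mem_iInter, Set.mem_setOf_eq]
  have key := fm_aux (fun j => a j (Fin.last n))
    (fun j => ∑ i : Fin n, a j i.castSucc * y i) b
  rw [show (∃ x, (∀ j, ∑ i, a j i * x i ≤ b j) ∧ x ∘ Fin.castSucc = y) ↔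
      (∃ t : ℝ, ∀ j, (∑ i : Fin n, a j i.castSucc * y i) + a j (Fin.last n) * t ≤ b j) from ?_,
    key]
  · constructor
    · rintro ⟨h0, hcross⟩ (⟨j, hj⟩ | ⟨p, q⟩)
      · exact h0 ⟨j, hj⟩
      · have := hcross p q
        simp only [Sum.elim_inr, sub_mul, Finset.sum_sub_distrib, mul_assoc,
          ← Finset.mul_sum]
        exact this
    · intro h
      refine ⟨fun j => h (Sum.inl j), fun p q => ?_⟩
      have := h (Sum.inr (p, q))
      simp only [Sum.elim_inr, sub_mul, Finset.sum_sub_distrib, mul_assoc,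
        ← Finset.mul_sum] at this
      exact this
  · constructor
    · rintro ⟨x, hx, rfl⟩
      refine ⟨x (Fin.last n), fun j => ?_⟩
      have := hx j
      rw [Fin.sum_univ_castSucc] at this
      exact this
    · rintro ⟨t, ht⟩
      refine ⟨Fin.snoc y t, fun j => ?_, funext fun i => Fin.snoc_castSucc ..
        ⟩
      rw [Fin.sum_univ_castSucc]
      simpa using ht j


/-- Fourier–Motzkin elimination: the image of a polyhedron in `ℝ^(n+1)` under the
projection forgetting the last coordinate is a polyhedron in `ℝ^n`. -/
theorem polyhedron_projection (n : ℕ) (P : Set (Fin (n + 1) → ℝ))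
    (hP : IsPolyhedron P) :
    IsPolyhedron ((fun x : Fin (n + 1) → ℝ => x ∘ Fin.castSucc) '' P) :=
  polyhedron_projection' n P hP
end

section
/- Projection for the Octagons domain: for every n ≥ 1 and every octagon P in ℝ^(n+1), the image of P under the projection π : (Fin (n+1) → ℝ) → (Fin n → ℝ) that forgets the last coordinate (π x = x ∘ Fin.castSucc) is an octagon in ℝ^n. -/
/-- An octagonal functional on `ℝ^n`: `x ↦ ε₁ * x i + ε₂ * x j` with
`ε₁, ε₂ ∈ {-1, 0, 1}`. -/
def IsOctagonalFunctional {n : ℕ} (f : (Fin n → ℝ) → ℝ) : Prop :=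
  ∃ (i j : Fin n) (ε₁ ε₂ : ℝ), ε₁ ∈ ({-1, 0, 1} : Set ℝ) ∧ ε₂ ∈ ({-1, 0, 1} : Set ℝ) ∧
    ∀ x, f x = ε₁ * x i + ε₂ * x j

/-- An octagon in `ℝ^n` is a finite intersection of sets `{x | f k x ≤ b k}`
where each `f k` is an octagonal functional. -/
def IsOctagon {n : ℕ} (P : Set (Fin n → ℝ)) : Prop :=
  ∃ (K : Type) (_ : Fintype K) (f : K → (Fin n → ℝ) → ℝ) (b : K → ℝ),
    (∀ k, IsOctagonalFunctional (f k)) ∧ P = ⋂ k : K, {x : Fin n → ℝ | f k x ≤ b k}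

private lemma aux1 {cc dd bb v t : ℝ} (h : 0 < cc) (hle : dd * v + cc * t ≤ bb) :
    dd / cc * v + t ≤ bb / cc := by
  have h2 : (dd * v + cc * t) / cc ≤ bb / cc := by gcongr
  rw [add_div, mul_div_cancel_left₀ _ h.ne'] at h2
  rw [div_mul_eq_mul_div]
  linarith

private lemma aux3 {ck cl dk dl bk bl vk vl : ℝ} (hk : 0 < ck) (_hl : cl < 0)
    (h : dk / ck * vk + dl / (-cl) * vl ≤ bk / ck + bl / (-cl)) :
    (dl * vl - bl) / (-cl) ≤ (bk - dk * vk) / ck := by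
  rw [div_mul_eq_mul_div, div_mul_eq_mul_div] at h
  rw [sub_div, sub_div]
  linarith

/-- Projection for the Octagons domain: for `n ≥ 1`, the image of an octagon in
`ℝ^(n+1)` under the projection forgetting the last coordinate is an octagon in `ℝ^n`. -/
theorem octagon_projection (n : ℕ) (hn : 1 ≤ n) (P : Set (Fin (n + 1) → ℝ))
    (hP : IsOctagon P) :
    IsOctagon ((fun x : Fin (n + 1) → ℝ => x ∘ Fin.castSucc) '' P) := by
  classical
  obtain ⟨K, _, f, b, hf, rfl⟩ := hP
  simp only [IsOctagonalFunctional] at hf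
  choose i j ε₁ ε₂ hε₁ hε₂ hfk using hf
  have hε₁' : ∀ k, ε₁ k = -1 ∨ ε₁ k = 0 ∨ ε₁ k = 1 := fun k => by simpa using hε₁ k
  have hε₂' : ∀ k, ε₂ k = -1 ∨ ε₂ k = 0 ∨ ε₂ k = 1 := fun k => by simpa using hε₂ k
  set z : Fin n := ⟨0, hn⟩ with hz
  set lo : Fin (n + 1) → Fin n := fun a => if h : a = Fin.last n then z else a.castPred h
    with hlo
  set δ₁ : K → ℝ := fun k => if i k = Fin.last n then 0 else ε₁ k with hδ₁
  set δ₂ : K → ℝ := fun k => if j k = Fin.last n then 0 else ε₂ k with hδ₂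
  set c : K → ℝ := fun k =>
    (if i k = Fin.last n then ε₁ k else 0) + (if j k = Fin.last n then ε₂ k else 0) with hc
  set d : K → ℝ := fun k => if i k = Fin.last n then δ₂ k else δ₁ k with hd
  set m : K → Fin n := fun k => if i k = Fin.last n then lo (j k) else lo (i k) with hm
  have hδ₁mem : ∀ k, δ₁ k = -1 ∨ δ₁ k = 0 ∨ δ₁ k = 1 := by
    intro k; rw [hδ₁]; dsimp only; split_ifs
    · exact Or.inr (Or.inl rfl)
    · exact hε₁' k
  have hδ₂mem : ∀ k, δ₂ k = -1 ∨ δ₂ k = 0 ∨ δ₂ k = 1 := by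
    intro k; rw [hδ₂]; dsimp only; split_ifs
    · exact Or.inr (Or.inl rfl)
    · exact hε₂' k
  -- decomposition
  have hA : ∀ k x, f k x = δ₁ k * x (Fin.castSucc (lo (i k))) +
      δ₂ k * x (Fin.castSucc (lo (j k))) + c k * x (Fin.last n) := by
    intro k x
    rw [hfk]
    by_cases h1 : i k = Fin.last n <;> by_cases h2 : j k = Fin.last n <;>
      simp [hδ₁, hδ₂, hc, hlo, h1, h2, Fin.castSucc_castPred] <;> ring
  have hB : ∀ k, c k ≠ 0 → ∀ x, f k x = d k * x (Fin.castSucc (m k)) + c k * x (Fin.last n) := by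
    intro k hk x
    rw [hA k x]
    by_cases h1 : i k = Fin.last n <;> by_cases h2 : j k = Fin.last n
    · simp [hδ₁, hδ₂, hd, hm, h1, h2]
    · simp [hδ₁, hδ₂, hd, hm, h1, h2]
    · simp [hδ₁, hδ₂, hd, hm, h1, h2]
    · exfalso; apply hk; simp [hc, h1, h2]
  have hdc : ∀ k, c k ≠ 0 → (d k / c k = -1 ∨ d k / c k = 0 ∨ d k / c k = 1) := by
    intro k hk
    by_cases h1 : i k = Fin.last n <;> by_cases h2 : j k = Fin.last n
    · have : d k = 0 := by simp [hd, hδ₂, h1, h2]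
      rw [this, zero_div]; exact Or.inr (Or.inl rfl)
    · have hck : c k = ε₁ k := by simp [hc, h1, h2]
      have hdk : d k = ε₂ k := by simp [hd, hδ₂, h1, h2]
      rw [hck] at hk ⊢; rw [hdk]
      rcases hε₁' k with h | h | h <;> rcases hε₂' k with h' | h' | h' <;>
        simp [h, h'] at hk ⊢ <;> norm_num
    · have hck : c k = ε₂ k := by simp [hc, h1, h2]
      have hdk : d k = ε₁ k := by simp [hd, hδ₁, h1, h2]
      rw [hck] at hk ⊢; rw [hdk]
      rcases hε₂' k with h | h | h <;> rcases hε₁' k with h' | h' | h' <;>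
        simp [h, h'] at hk ⊢ <;> norm_num
    · exfalso; apply hk; simp [hc, h1, h2]
  unfold IsOctagon
  refine ⟨K ⊕ K × K, inferInstance,
    Sum.elim
      (fun k => if c k = 0 then
        (fun y : Fin n → ℝ => δ₁ k * y (lo (i k)) + δ₂ k * y (lo (j k))) else fun _ => 0)
      (fun kl => if 0 < c kl.1 ∧ c kl.2 < 0 then
        (fun y : Fin n → ℝ => d kl.1 / c kl.1 * y (m kl.1) + d kl.2 / (-c kl.2) * y (m kl.2))
        else fun _ => 0),
    Sum.elim (fun k => if c k = 0 then b k else 0)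
      (fun kl => if 0 < c kl.1 ∧ c kl.2 < 0 then b kl.1 / c kl.1 + b kl.2 / (-c kl.2) else 0),
    ?_, ?_⟩
  · rintro (k | ⟨k, l⟩)
    · simp only [Sum.elim_inl]
      split_ifs with hck
      · exact ⟨lo (i k), lo (j k), δ₁ k, δ₂ k, by simpa using hδ₁mem k,
          by simpa using hδ₂mem k, fun x => rfl⟩
      · exact ⟨z, z, 0, 0, by simp, by simp, fun x => by simp⟩
    · simp only [Sum.elim_inr]
      split_ifs with hkl
      · refine ⟨m k, m l, d k / c k, d l / (-c l), by simpa using hdc k hkl.1.ne', ?_,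
          fun x => rfl⟩
        have : d l / (-c l) = -(d l / c l) := by rw [div_neg]
        rw [this]
        rcases hdc l hkl.2.ne with h | h | h <;> rw [h] <;> norm_num
      · exact ⟨z, z, 0, 0, by simp, by simp, fun x => by simp⟩
  · ext y
    simp only [Set.mem_image, Set.mem_iInter, Set.mem_setOf_eq]
    constructor
    · rintro ⟨x, hx, rfl⟩
      rintro (k | ⟨k, l⟩)
      · simp only [Sum.elim_inl]
        split_ifs with hck
        · have h1 := hx k
          rw [hA k x, hck, zero_mul, add_zero] at h1
          exact h1
        · exact le_refl 0
      · simp only [Sum.elim_inr]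
        split_ifs with hkl
        · obtain ⟨hkpos, hlneg⟩ := hkl
          have h1 := hx k
          rw [hB k hkpos.ne' x] at h1
          have h2 := hx l
          rw [hB l hlneg.ne x] at h2
          have e1 : d k / c k * x (Fin.castSucc (m k)) + x (Fin.last n) ≤ b k / c k :=
            aux1 hkpos h1
          have e2 : d l / (-c l) * x (Fin.castSucc (m l)) + (-(x (Fin.last n))) ≤ b l / (-c l) := by
            have hlpos : (0:ℝ) < -c l := by linarith
            refine aux1 hlpos ?_
            linarith
          simp only [Function.comp_apply]
          linarith
        · exact le_refl 0
    · intro hy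
      have hzero : ∀ k, c k = 0 → δ₁ k * y (lo (i k)) + δ₂ k * y (lo (j k)) ≤ b k := by
        intro k hk
        have := hy (Sum.inl k)
        simpa [hk] using this
      have hpair : ∀ k l, 0 < c k → c l < 0 →
          d k / c k * y (m k) + d l / (-c l) * y (m l) ≤ b k / c k + b l / (-c l) := by
        intro k l h1 h2
        have := hy (Sum.inr (k, l))
        simpa [h1, h2] using this
      set up : K → ℝ := fun k => (b k - d k * y (m k)) / c k with hup
      set low : K → ℝ := fun k => (d k * y (m k) - b k) / (-c k) with hlow
      set Kpos : Finset K := Finset.univ.filter (fun k => 0 < c k) with hKpos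
      set Kneg : Finset K := Finset.univ.filter (fun k => c k < 0) with hKneg
      have key : ∀ k ∈ Kpos, ∀ l ∈ Kneg, low l ≤ up k := by
        intro k hk l hl
        rw [hKpos, Finset.mem_filter] at hk
        rw [hKneg, Finset.mem_filter] at hl
        exact aux3 hk.2 hl.2 (hpair k l hk.2 hl.2)
      set t : ℝ := if hpos : Kpos.Nonempty then Kpos.inf' hpos up
        else if hneg : Kneg.Nonempty then Kneg.sup' hneg low else 0 with ht
      have ht_up : ∀ k ∈ Kpos, t ≤ up k := by
        intro k hk
        rw [ht]
        rw [dif_pos ⟨k, hk⟩]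
        exact Finset.inf'_le up hk
      have ht_low : ∀ l ∈ Kneg, low l ≤ t := by
        intro l hl
        rw [ht]
        split_ifs with hpos hneg
        · obtain ⟨k0, hk0, hEq⟩ := Finset.exists_mem_eq_inf' hpos up
          rw [hEq]
          exact key k0 hk0 l hl
        · exact Finset.le_sup' low hl
        · exact absurd ⟨l, hl⟩ hneg
      refine ⟨Fin.snoc y t, ?_, ?_⟩
      · intro k
        rcases lt_trichotomy (c k) 0 with h | h | h
        · have hmem : k ∈ Kneg := by rw [hKneg, Finset.mem_filter]; exact ⟨Finset.mem_univ k, h⟩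
          have h1 := ht_low k hmem
          rw [hlow] at h1
          have hlpos : (0:ℝ) < -c k := by linarith
          rw [div_le_iff₀ hlpos] at h1
          rw [hB k h.ne]
          simp only [Fin.snoc_castSucc, Fin.snoc_last]
          nlinarith [h1]
        · rw [hA k]
          simp only [Fin.snoc_castSucc, Fin.snoc_last, h, zero_mul, add_zero]
          exact hzero k h
        · have hmem : k ∈ Kpos := by rw [hKpos, Finset.mem_filter]; exact ⟨Finset.mem_univ k, h⟩
          have h1 := ht_up k hmem
          rw [hup] at h1
          rw [le_div_iff₀ h] at h1
          rw [hB k h.ne']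
          simp only [Fin.snoc_castSucc, Fin.snoc_last]
          nlinarith [h1]
      · funext a
        simp [Fin.snoc_castSucc]
end

section
/- Projection for the Bounded Differences domain: for every n ≥ 1 and every bounded-difference set P in ℝ^(n+1), the image of P under the projection π : (Fin (n+1) → ℝ) → (Fin n → ℝ) that forgets the last coordinate (π x = x ∘ Fin.castSucc) is a bounded-difference set in ℝ^n. -/
/-- A bounded-difference functional on `ℝ^n`: `x ↦ ε₁ * x i + ε₂ * x j` with
`ε₁, ε₂ ∈ {-1, 0, 1}` and `ε₁ ≠ ε₂`. -/
def IsBDFunctional {n : ℕ} (f : (Fin n → ℝ) → ℝ) : Prop :=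
  ∃ (i j : Fin n) (ε₁ ε₂ : ℝ), ε₁ ∈ ({-1, 0, 1} : Set ℝ) ∧ ε₂ ∈ ({-1, 0, 1} : Set ℝ) ∧
    ε₁ ≠ ε₂ ∧ ∀ x, f x = ε₁ * x i + ε₂ * x j

/-- A bounded-difference set in `ℝ^n` is a finite intersection of sets
`{x | f k x ≤ b k}` where each `f k` is a bounded-difference functional. -/
def IsBDS {n : ℕ} (P : Set (Fin n → ℝ)) : Prop :=
  ∃ (K : Type) (_ : Fintype K) (f : K → (Fin n → ℝ) → ℝ) (b : K → ℝ),
    (∀ k, IsBDFunctional (f k)) ∧ P = ⋂ k : K, {x : Fin n → ℝ | f k x ≤ b k}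

lemma exists_between_aux {K L : Type} [Fintype K] [Fintype L] (v : K → ℝ) (u : L → ℝ)
    (h : ∀ k l, v k ≤ u l) : ∃ t, (∀ k, v k ≤ t) ∧ (∀ l, t ≤ u l) := by
  cases isEmpty_or_nonempty K with
  | inl hK =>
    cases isEmpty_or_nonempty L with
    | inl hL => exact ⟨0, fun k => hK.elim k, fun l => hL.elim l⟩
    | inr hL =>
      refine ⟨Finset.univ.inf' Finset.univ_nonempty u, fun k => hK.elim k, fun l => ?_⟩
      exact Finset.inf'_le _ (Finset.mem_univ l)
  | inr hK =>
    refine ⟨Finset.univ.sup' Finset.univ_nonempty v,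
      fun k => Finset.le_sup' _ (Finset.mem_univ k), fun l => ?_⟩
    exact Finset.sup'_le _ _ fun k _ => h k l

/-- Projection for the Bounded Differences domain: for `n ≥ 1`, the image of a
bounded-difference set in `ℝ^(n+1)` under the projection forgetting the last
coordinate is a bounded-difference set in `ℝ^n`. -/
theorem bds_projection (n : ℕ) (hn : 1 ≤ n) (P : Set (Fin (n + 1) → ℝ))
    (hP : IsBDS P) :
    IsBDS ((fun x : Fin (n + 1) → ℝ => x ∘ Fin.castSucc) '' P) := by
  classical
  obtain ⟨K, hK, f, b, hf, hPeq⟩ := hP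
  choose i j ε₁ ε₂ hε₁ hε₂ hne hfx using hf
  have hε₁' : ∀ k, ε₁ k = -1 ∨ ε₁ k = 0 ∨ ε₁ k = 1 := by
    intro k; simpa [Set.mem_insert_iff] using hε₁ k
  have hε₂' : ∀ k, ε₂ k = -1 ∨ ε₂ k = 0 ∨ ε₂ k = 1 := by
    intro k; simpa [Set.mem_insert_iff] using hε₂ k
  set last : Fin (n + 1) := Fin.last n with hlast
  set i' : K → Fin n := fun k => if h : i k = last then ⟨0, hn⟩ else (i k).castPred h with hi'
  set j' : K → Fin n := fun k => if h : j k = last then ⟨0, hn⟩ else (j k).castPred h with hj'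
  set δ₁ : K → ℝ := fun k => if i k = last then 0 else ε₁ k with hδ₁def
  set δ₂ : K → ℝ := fun k => if j k = last then 0 else ε₂ k with hδ₂def
  set c : K → ℝ := fun k =>
    (if i k = last then ε₁ k else 0) + (if j k = last then ε₂ k else 0) with hcdef
  set g : K → (Fin n → ℝ) → ℝ := fun k y => δ₁ k * y (i' k) + δ₂ k * y (j' k) with hgdef
  have hdecomp : ∀ k x, f k x = c k * x last + g k (x ∘ Fin.castSucc) := by
    intro k x
    rw [hfx]
    simp only [hcdef, hgdef, hδ₁def, hδ₂def, hi', hj', Function.comp]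
    by_cases h1 : i k = last <;> by_cases h2 : j k = last <;>
      simp [h1, h2, Fin.castSucc_castPred] <;> ring
  have hδ₁' : ∀ k, δ₁ k = -1 ∨ δ₁ k = 0 ∨ δ₁ k = 1 := by
    intro k
    simp only [hδ₁def]
    split_ifs
    · tauto
    · exact hε₁' k
  have hδ₂' : ∀ k, δ₂ k = -1 ∨ δ₂ k = 0 ∨ δ₂ k = 1 := by
    intro k
    simp only [hδ₂def]
    split_ifs
    · tauto
    · exact hε₂' k
  -- if δ₁ = δ₂ then both are zero
  have hδeq : ∀ k, δ₁ k = δ₂ k → δ₁ k = 0 ∧ δ₂ k = 0 := by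
    intro k h
    simp only [hδ₁def, hδ₂def] at h ⊢
    by_cases h1 : i k = last <;> by_cases h2 : j k = last <;>
      simp [h1, h2] at h ⊢ <;> tauto
  -- the reduced functional g k is always a BD functional
  have hgBD : ∀ k, IsBDFunctional (g k) := by
    intro k
    by_cases h : δ₁ k = δ₂ k
    · obtain ⟨h1, h2⟩ := hδeq k h
      refine ⟨⟨0, hn⟩, ⟨0, hn⟩, 1, -1, by norm_num, by norm_num, by norm_num, ?_⟩
      intro y; simp only [hgdef, h1, h2]; ring
    · refine ⟨i' k, j' k, δ₁ k, δ₂ k, ?_, ?_, h, fun y => rfl⟩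
      · rcases hδ₁' k with h | h | h <;> simp [h]
      · rcases hδ₂' k with h | h | h <;> simp [h]
  have hc' : ∀ k, c k = -1 ∨ c k = 0 ∨ c k = 1 := by
    intro k
    simp only [hcdef]
    by_cases h1 : i k = last <;> by_cases h2 : j k = last <;> simp [h1, h2]
    · rcases hε₁' k with h | h | h <;> rcases hε₂' k with h' | h' | h' <;>
        first
          | (exact absurd (h.trans h'.symm) (hne k))
          | (rw [h, h']; norm_num)
    · exact hε₁' k
    · exact hε₂' k
  -- when c k ≠ 0, g k is a single term
  have hone : ∀ k, c k ≠ 0 → δ₁ k = 0 ∨ δ₂ k = 0 := by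
    intro k hk
    by_cases h1 : i k = last
    · left; simp [hδ₁def, h1]
    · by_cases h2 : j k = last
      · right; simp [hδ₂def, h2]
      · exact absurd (by simp [hcdef, h1, h2]) hk
  set m : K → Fin n := fun k => if δ₁ k = 0 then j' k else i' k with hm
  set δ : K → ℝ := fun k => δ₁ k + δ₂ k with hδ
  have hg1 : ∀ k, c k ≠ 0 → ∀ y, g k y = δ k * y (m k) := by
    intro k hk y
    rcases hone k hk with h | h
    · simp [hgdef, hm, hδ, h]
    · by_cases h' : δ₁ k = 0
      · simp [hgdef, hm, hδ, h, h']
      · simp [hgdef, hm, hδ, h, h']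
  -- range of δ depending on sign of c
  have hsum : ∀ k, c k + δ k = ε₁ k + ε₂ k := by
    intro k
    simp only [hcdef, hδ, hδ₁def, hδ₂def]
    split_ifs <;> ring
  have hδrange : ∀ k, c k ≠ 0 → (δ k = -1 ∨ δ k = 0 ∨ δ k = 1) := by
    intro k hk
    rcases hone k hk with h | h
    · simp only [hδ]; rw [h, zero_add]; exact hδ₂' k
    · simp only [hδ]; rw [h, add_zero]; exact hδ₁' k
  have hδpos : ∀ k, c k = 1 → δ k = -1 ∨ δ k = 0 := by
    intro k hk
    rcases hδrange k (by rw [hk]; norm_num) with h | h | h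
    · left; exact h
    · right; exact h
    · exfalso
      have hs := hsum k
      rw [hk, h] at hs
      rcases hε₁' k with h1 | h1 | h1 <;> rcases hε₂' k with h2 | h2 | h2 <;>
        rw [h1, h2] at hs <;> first | (exact hne k (h1.trans h2.symm)) | (norm_num at hs)
  have hδneg : ∀ k, c k = -1 → δ k = 0 ∨ δ k = 1 := by
    intro k hk
    rcases hδrange k (by rw [hk]; norm_num) with h | h | h
    · exfalso
      have hs := hsum k
      rw [hk, h] at hs
      rcases hε₁' k with h1 | h1 | h1 <;> rcases hε₂' k with h2 | h2 | h2 <;>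
        rw [h1, h2] at hs <;> first | (exact hne k (h1.trans h2.symm)) | (norm_num at hs)
    · left; exact h
    · right; exact h
  -- build the new system
  refine ⟨{k : K // c k = 0} ⊕ ({k : K // c k = 1} × {k : K // c k = -1}), inferInstance,
    fun k' => Sum.rec (fun k => g k.1) (fun p => fun y => g p.1.1 y + g p.2.1 y) k',
    fun k' => Sum.rec (fun k => b k.1) (fun p => b p.1.1 + b p.2.1) k', ?_, ?_⟩
  · rintro (⟨k, hk⟩ | ⟨⟨k, hk⟩, ⟨l, hl⟩⟩)
    · exact hgBD k
    · -- pair functional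
      have hk0 : c k ≠ 0 := by rw [hk]; norm_num
      have hl0 : c l ≠ 0 := by rw [hl]; norm_num
      by_cases h : δ k = δ l
      · have h0 : δ k = 0 := by
          rcases hδpos k hk with h1 | h1
          · rcases hδneg l hl with h2 | h2 <;> rw [h1, h2] at h <;> norm_num at h
          · exact h1
        have h0' : δ l = 0 := h.symm.trans h0
        refine ⟨⟨0, hn⟩, ⟨0, hn⟩, 1, -1, by norm_num, by norm_num, by norm_num, ?_⟩
        intro y
        show g k y + g l y = _
        rw [hg1 k hk0 y, hg1 l hl0 y, h0, h0']
        ring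
      · refine ⟨m k, m l, δ k, δ l, ?_, ?_, h, ?_⟩
        · rcases hδpos k hk with h' | h' <;> simp [h']
        · rcases hδneg l hl with h' | h' <;> simp [h']
        · intro y
          show g k y + g l y = _
          rw [hg1 k hk0 y, hg1 l hl0 y]
  · ext y
    constructor
    · rintro ⟨x, hx, rfl⟩
      rw [hPeq] at hx
      simp only [Set.mem_iInter, Set.mem_setOf_eq] at hx ⊢
      rintro (⟨k, hk⟩ | ⟨⟨k, hk⟩, ⟨l, hl⟩⟩)
      · have := hx k
        rw [hdecomp k x, hk] at this
        simpa using this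
      · have h1 := hx k
        have h2 := hx l
        rw [hdecomp k x, hk] at h1
        rw [hdecomp l x, hl] at h2
        simp only at h1 h2 ⊢
        linarith
    · intro hy
      simp only [Set.mem_iInter, Set.mem_setOf_eq] at hy
      obtain ⟨t, ht1, ht2⟩ := exists_between_aux
        (K := {l : K // c l = -1}) (L := {k : K // c k = 1})
        (fun l => g l.1 y - b l.1) (fun k => b k.1 - g k.1 y)
        (fun l k => by
          have h' : g k.1 y + g l.1 y ≤ b k.1 + b l.1 := hy (Sum.inr (k, l))
          show g l.1 y - b l.1 ≤ b k.1 - g k.1 y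
          linarith)
      refine ⟨Fin.snoc y t, ?_, ?_⟩
      · rw [hPeq]
        simp only [Set.mem_iInter, Set.mem_setOf_eq]
        intro k
        have hcomp : (Fin.snoc y t : Fin (n+1) → ℝ) ∘ Fin.castSucc = y := by
          funext a; simp [Fin.snoc_castSucc]
        have hlastval : (Fin.snoc y t : Fin (n+1) → ℝ) last = t := by
          simp [hlast, Fin.snoc_last]
        rw [hdecomp k, hcomp, hlastval]
        rcases hc' k with hk | hk | hk
        · have := ht1 ⟨k, hk⟩
          simp only at this
          rw [hk]; linarith
        · have := hy (Sum.inl ⟨k, hk⟩)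
          simp only at this
          rw [hk]; linarith
        · have := ht2 ⟨k, hk⟩
          simp only at this
          rw [hk]; linarith
      · funext a; simp [Fin.snoc_castSucc]
end

section
/- Existence of a best abstraction into the Octagons domain: for every subset S of ℝ^n there exists a least octagon containing S, i.e., an octagon O with S ⊆ O such that for every octagon O' with S ⊆ O' one has O ⊆ O'. -/
/-- Coefficients indexed by `Fin 3`. -/
def octCoeff : Fin 3 → ℝ := ![-1, 0, 1]

lemma octCoeff_mem (e : Fin 3) : octCoeff e ∈ ({-1, 0, 1} : Set ℝ) := by
  fin_cases e <;> simp [octCoeff]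

lemma exists_octCoeff {ε : ℝ} (h : ε ∈ ({-1, 0, 1} : Set ℝ)) : ∃ e : Fin 3, octCoeff e = ε := by
  simp only [Set.mem_insert_iff, Set.mem_singleton_iff] at h
  rcases h with rfl | rfl | rfl
  · exact ⟨0, by simp [octCoeff]⟩
  · exact ⟨1, by simp [octCoeff]⟩
  · exact ⟨2, by simp [octCoeff]⟩

/-- All octagonal functionals, indexed by a fintype. -/
def octF (n : ℕ) (k : Fin n × Fin n × Fin 3 × Fin 3) : (Fin n → ℝ) → ℝ :=
  fun x => octCoeff k.2.2.1 * x k.1 + octCoeff k.2.2.2 * x k.2.1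

lemma octF_isOct (n : ℕ) (k : Fin n × Fin n × Fin 3 × Fin 3) :
    IsOctagonalFunctional (octF n k) :=
  ⟨k.1, k.2.1, octCoeff k.2.2.1, octCoeff k.2.2.2, octCoeff_mem _, octCoeff_mem _,
    fun _ => rfl⟩

lemma exists_octF {n : ℕ} {f : (Fin n → ℝ) → ℝ} (h : IsOctagonalFunctional f) :
    ∃ k, ∀ x, f x = octF n k x := by
  obtain ⟨i, j, ε₁, ε₂, h₁, h₂, hf⟩ := h
  obtain ⟨e₁, he₁⟩ := exists_octCoeff h₁
  obtain ⟨e₂, he₂⟩ := exists_octCoeff h₂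
  exact ⟨(i, j, e₁, e₂), fun x => by simp [hf x, octF, he₁, he₂]⟩

set_option maxHeartbeats 1000000 in
/-- Best abstraction into the Octagons domain: every `S ⊆ ℝ^n` has a least
octagon containing it. -/
theorem best_octagon_abstraction (n : ℕ) (S : Set (Fin n → ℝ)) :
    ∃ O : Set (Fin n → ℝ), IsOctagon O ∧ S ⊆ O ∧
      ∀ O' : Set (Fin n → ℝ), IsOctagon O' → S ⊆ O' → O ⊆ O' := by
  classical
  rcases S.eq_empty_or_nonempty with rfl | hS
  · rcases Nat.eq_zero_or_pos n with rfl | hn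
    · refine ⟨Set.univ, ⟨Empty, inferInstance, fun k => k.elim, fun k => k.elim,
        fun k => k.elim, by simp⟩, by simp, ?_⟩
      rintro O' ⟨K, _, f, b, hf, rfl⟩ _ x _
      simp only [Set.mem_iInter]
      intro k
      obtain ⟨i, -⟩ := hf k
      exact i.elim0
    · -- the empty octagon
      set i0 : Fin n := ⟨0, hn⟩
      refine ⟨⋂ c : Bool, {x : Fin n → ℝ |
          (fun (c : Bool) (x : Fin n → ℝ) => if c then x i0 else -x i0) c x ≤
            (fun c : Bool => if c then (0:ℝ) else -1) c},
        ⟨Bool, inferInstance, _, _, ?_, rfl⟩, by simp, ?_⟩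
      · intro c
        cases c
        · exact ⟨i0, i0, -1, 0, by simp, by simp, fun x => by simp⟩
        · exact ⟨i0, i0, 1, 0, by simp, by simp, fun x => by simp⟩
      · intro O' _ _ x hx
        exfalso
        have h1 := Set.mem_iInter.1 hx true
        have h2 := Set.mem_iInter.1 hx false
        simp only [Set.mem_setOf_eq, if_true, if_false, Bool.false_eq_true] at h1 h2
        linarith
  · refine ⟨⋂ k : {k : Fin n × Fin n × Fin 3 × Fin 3 // BddAbove (octF n k '' S)},
      {x | octF n k.1 x ≤ sSup (octF n k.1 '' S)},
      ⟨{k : Fin n × Fin n × Fin 3 × Fin 3 // BddAbove (octF n k '' S)}, inferInstance,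
        fun k => octF n k.1, fun k => sSup (octF n k.1 '' S),
        fun k => octF_isOct n k.1, rfl⟩, ?_, ?_⟩
    · intro x hx
      exact Set.mem_iInter.2 fun k => le_csSup k.2 ⟨x, hx, rfl⟩
    · rintro O' ⟨K, _, g, b, hg, rfl⟩ hSO' x hx
      refine Set.mem_iInter.2 fun k => ?_
      obtain ⟨k', hk'⟩ := exists_octF (hg k)
      have hbdd : BddAbove (octF n k' '' S) := by
        refine ⟨b k, ?_⟩
        rintro _ ⟨y, hy, rfl⟩
        rw [← hk' y]
        exact Set.mem_iInter.1 (hSO' hy) k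
      have h1 : octF n k' x ≤ sSup (octF n k' '' S) :=
        Set.mem_iInter.1 hx ⟨k', hbdd⟩
      have h2 : sSup (octF n k' '' S) ≤ b k := by
        refine csSup_le (hS.image _) ?_
        rintro _ ⟨y, hy, rfl⟩
        rw [← hk' y]
        exact Set.mem_iInter.1 (hSO' hy) k
      show g k x ≤ b k
      rw [hk' x]
      exact h1.trans h2
end

section
/- Existence of a best abstraction into the Bounded Differences domain: for every nonempty subset S of ℝ^n there exists a least bounded-difference set containing S, i.e., a bounded-difference set B with S ⊆ B such that for every bounded-difference set B' with S ⊆ B' one has B ⊆ B'. -/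
/-- the three coefficients -/
noncomputable def bdCoef : Fin 3 → ℝ := ![(-1 : ℝ), 0, 1]

lemma bdCoef_mem (m : Fin 3) : bdCoef m ∈ ({-1, 0, 1} : Set ℝ) := by
  fin_cases m <;> simp [bdCoef]

lemma bdCoef_surj {ε : ℝ} (h : ε ∈ ({-1, 0, 1} : Set ℝ)) : ∃ m : Fin 3, bdCoef m = ε := by
  rcases h with rfl | rfl | rfl
  · exact ⟨0, rfl⟩
  · exact ⟨1, rfl⟩
  · exact ⟨2, rfl⟩

/-- the generic functional indexed by `(i, j, m₁, m₂)` -/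
noncomputable def bdF {n : ℕ} (q : Fin n × Fin n × Fin 3 × Fin 3) (x : Fin n → ℝ) : ℝ :=
  bdCoef q.2.2.1 * x q.1 + bdCoef q.2.2.2 * x q.2.1

/-- Best abstraction into the Bounded Differences domain: every nonempty
`S ⊆ ℝ^n` has a least bounded-difference set containing it. -/
theorem best_bds_abstraction (n : ℕ) (S : Set (Fin n → ℝ)) (hS : S.Nonempty) :
    ∃ B : Set (Fin n → ℝ), IsBDS B ∧ S ⊆ B ∧
      ∀ B' : Set (Fin n → ℝ), IsBDS B' → S ⊆ B' → B ⊆ B' := by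
  classical
  set K : Type := {q : Fin n × Fin n × Fin 3 × Fin 3 //
    bdCoef q.2.2.1 ≠ bdCoef q.2.2.2 ∧ BddAbove (bdF q '' S)} with hK
  set B : Set (Fin n → ℝ) := ⋂ k : K, {x | bdF k.1 x ≤ sSup (bdF k.1 '' S)} with hB
  have hSB : S ⊆ B := by
    intro x hx
    simp only [hB, Set.mem_iInter, Set.mem_setOf_eq]
    intro k
    exact le_csSup k.2.2 ⟨x, hx, rfl⟩
  refine ⟨B, ?_, hSB, ?_⟩
  · refine ⟨K, inferInstance, fun k => bdF k.1, fun k => sSup (bdF k.1 '' S), fun k => ?_, rfl⟩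
    exact ⟨k.1.1, k.1.2.1, bdCoef k.1.2.2.1, bdCoef k.1.2.2.2,
      bdCoef_mem _, bdCoef_mem _, k.2.1, fun x => rfl⟩
  · rintro B' ⟨K', _, f, b, hf, rfl⟩ hSB' x hx
    simp only [Set.mem_iInter, Set.mem_setOf_eq]
    intro k'
    obtain ⟨i, j, ε₁, ε₂, hε₁, hε₂, hne, hfx⟩ := hf k'
    obtain ⟨m₁, hm₁⟩ := bdCoef_surj hε₁
    obtain ⟨m₂, hm₂⟩ := bdCoef_surj hε₂
    have hFeq : ∀ y, bdF (i, j, m₁, m₂) y = f k' y := by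
      intro y; rw [hfx]; simp [bdF, hm₁, hm₂]
    have hbdd : BddAbove (bdF (i, j, m₁, m₂) '' S) := by
      refine ⟨b k', ?_⟩
      rintro _ ⟨y, hy, rfl⟩
      have := hSB' hy
      simp only [Set.mem_iInter, Set.mem_setOf_eq] at this
      rw [hFeq]; exact this k'
    have hq : bdCoef m₁ ≠ bdCoef m₂ := by rw [hm₁, hm₂]; exact hne
    have hxk := Set.mem_iInter.1 hx (⟨(i, j, m₁, m₂), hq, hbdd⟩ : K)
    have hsup : sSup (bdF (i, j, m₁, m₂) '' S) ≤ b k' := by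
      apply csSup_le (hS.image _)
      rintro _ ⟨y, hy, rfl⟩
      have := hSB' hy
      simp only [Set.mem_iInter, Set.mem_setOf_eq] at this
      rw [hFeq]; exact this k'
    calc f k' x = bdF (i, j, m₁, m₂) x := (hFeq x).symm
      _ ≤ _ := hxk
      _ ≤ b k' := hsup
end

section
/- Least upper bound in the domain of convex polyhedra (poly-hull): for all polyhedra P and Q in ℝ^n, the topological closure of the convex hull of P ∪ Q is a polyhedron, it contains both P and Q, and it is the least such polyhedron: every polyhedron R with P ⊆ R and Q ⊆ R satisfies closure(convexHull ℝ (P ∪ Q)) ⊆ R. -/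
/-- basic facts -/
theorem poly_closed {n : ℕ} {P : Set (Fin n → ℝ)} (h : IsPolyhedron P) : IsClosed P := by
  obtain ⟨J, _, a, b, rfl⟩ := h
  refine isClosed_iInter fun j => isClosed_le ?_ continuous_const
  exact continuous_finset_sum _ fun i _ => continuous_const.mul (continuous_apply i)

theorem poly_convex {n : ℕ} {P : Set (Fin n → ℝ)} (h : IsPolyhedron P) : Convex ℝ P := by
  obtain ⟨J, _, a, b, rfl⟩ := h
  refine convex_iInter fun j => ?_
  refine convex_halfSpace_le ⟨fun x y => ?_, fun r x => ?_⟩ (b j)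
  · simp [mul_add, Finset.sum_add_distrib]
  · simp only [Pi.smul_apply, smul_eq_mul, Finset.mul_sum]
    exact Finset.sum_congr rfl fun i _ => by ring

theorem sum_comb {n : ℕ} (v w x : Fin n → ℝ) (r s : ℝ) :
    ∑ i, (r * v i + s * w i) * x i = r * ∑ i, v i * x i + s * ∑ i, w i * x i := by
  rw [Finset.mul_sum, Finset.mul_sum, ← Finset.sum_add_distrib]
  exact Finset.sum_congr rfl fun i _ => by ring

theorem sum_comb' {n : ℕ} (v y z : Fin n → ℝ) (r s : ℝ) :
    ∑ i, v i * (r * y i + s * z i) = r * (∑ i, v i * y i) + s * (∑ i, v i * z i) := by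
  rw [Finset.mul_sum, Finset.mul_sum, ← Finset.sum_add_distrib]
  exact Finset.sum_congr rfl fun i _ => by ring

theorem FM_exists {J : Type} [Fintype J] (u c b : J → ℝ) :
    (∃ t : ℝ, ∀ j, u j + c j * t ≤ b j) ↔
      ((∀ j, c j = 0 → u j ≤ b j) ∧
       ∀ p q, 0 < c p → c q < 0 →
         (-c q) * u p + c p * u q ≤ (-c q) * b p + c p * b q) := by
  classical
  constructor
  · rintro ⟨t, ht⟩
    constructor
    · intro j hj
      have := ht j
      simpa [hj] using this
    · intro p q hp hq
      have h1 := mul_le_mul_of_nonneg_left (ht p) (by linarith : (0:ℝ) ≤ -c q)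
      have h2 := mul_le_mul_of_nonneg_left (ht q) hp.le
      nlinarith [h1, h2]
  · rintro ⟨h0, hpq⟩
    set Pos := Finset.univ.filter (fun j => 0 < c j) with hPosdef
    set Neg := Finset.univ.filter (fun j => c j < 0) with hNegdef
    -- pairwise compatibility in divided form
    have hdiv : ∀ p ∈ Pos, ∀ q ∈ Neg, (b q - u q) / c q ≤ (b p - u p) / c p := by
      intro p hp q hq
      rw [hPosdef, Finset.mem_filter] at hp
      rw [hNegdef, Finset.mem_filter] at hq
      have hcp := hp.2
      have hcq := hq.2
      have key := hpq p q hcp hcq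
      have : (b q - u q) / c q = (u q - b q) / (-c q) := by
        rw [div_eq_div_iff (by exact hcq.ne) (by linarith)]
        ring
      rw [this, div_le_div_iff₀ (by linarith) hcp]
      nlinarith
    by_cases hP : Pos.Nonempty
    · set t := (Pos.image (fun p => (b p - u p) / c p)).min' (hP.image _) with ht
      refine ⟨t, fun j => ?_⟩
      rcases lt_trichotomy (c j) 0 with h | h | h
      · have hjNeg : j ∈ Neg := by simp [hNegdef, h]
        have hge : (b j - u j) / c j ≤ t := by
          apply Finset.le_min'
          intro v hv
          simp only [Finset.mem_image] at hv
          obtain ⟨p, hp, rfl⟩ := hv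
          exact hdiv p hp j hjNeg
        have := mul_le_mul_of_nonpos_left hge h.le
        rw [mul_div_cancel₀ _ h.ne] at this
        linarith
      · have := h0 j h
        simp [h]
        linarith
      · have hjPos : j ∈ Pos := by simp [hPosdef, h]
        have hle : t ≤ (b j - u j) / c j :=
          Finset.min'_le _ _ (Finset.mem_image_of_mem _ hjPos)
        have := mul_le_mul_of_nonneg_left hle h.le
        rw [mul_div_cancel₀ _ h.ne'] at this
        linarith
    · by_cases hN : Neg.Nonempty
      · set t := (Neg.image (fun q => (b q - u q) / c q)).max' (hN.image _) with ht
        refine ⟨t, fun j => ?_⟩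
        rcases lt_trichotomy (c j) 0 with h | h | h
        · have hjNeg : j ∈ Neg := by simp [hNegdef, h]
          have hge : (b j - u j) / c j ≤ t :=
            Finset.le_max' _ _ (Finset.mem_image_of_mem (fun q => (b q - u q) / c q) hjNeg)
          have := mul_le_mul_of_nonpos_left hge h.le
          rw [mul_div_cancel₀ _ h.ne] at this
          linarith
        · have := h0 j h
          simp [h]
          linarith
        · exact absurd (by simp [hPosdef, h] : j ∈ Pos) (by simp [Finset.not_nonempty_iff_eq_empty.mp hP])
      · refine ⟨0, fun j => ?_⟩
        rcases lt_trichotomy (c j) 0 with h | h | h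
        · exact absurd (by simp [hNegdef, h] : j ∈ Neg) (by simp [Finset.not_nonempty_iff_eq_empty.mp hN])
        · have := h0 j h
          simp [h]
          linarith
        · exact absurd (by simp [hPosdef, h] : j ∈ Pos) (by simp [Finset.not_nonempty_iff_eq_empty.mp hP])

theorem proj_poly (n : ℕ) : ∀ (m : ℕ) (J : Type) (_ : Fintype J) (a : J → Fin n → ℝ)
    (e : J → Fin m → ℝ) (b : J → ℝ),
    IsPolyhedron {x : Fin n → ℝ |
      ∃ y : Fin m → ℝ, ∀ j, ∑ i, a j i * x i + ∑ i, e j i * y i ≤ b j} := by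
  intro m
  induction m with
  | zero =>
    intro J hJ a e b
    refine ⟨J, hJ, a, b, ?_⟩
    ext x
    simp [Set.mem_iInter]
  | succ m ih =>
    intro J hJ a e b
    classical
    set c : J → ℝ := fun j => e j (Fin.last m) with hc
    set e' : J → Fin m → ℝ := fun j i => e j i.castSucc with he'
    -- the new constraint system after eliminating the last y-variable
    set a'' : J ⊕ J × J → Fin n → ℝ := fun j' => match j' with
      | .inl j => if c j = 0 then a j else 0
      | .inr (p, q) => if 0 < c p ∧ c q < 0 then
          (fun i => (-c q) * a p i + c p * a q i) else 0 with ha''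
    set e'' : J ⊕ J × J → Fin m → ℝ := fun j' => match j' with
      | .inl j => if c j = 0 then e' j else 0
      | .inr (p, q) => if 0 < c p ∧ c q < 0 then
          (fun i => (-c q) * e' p i + c p * e' q i) else 0 with he''
    set b'' : J ⊕ J × J → ℝ := fun j' => match j' with
      | .inl j => if c j = 0 then b j else 0
      | .inr (p, q) => if 0 < c p ∧ c q < 0 then (-c q) * b p + c p * b q else 0 with hb''
    have hset : {x : Fin n → ℝ |
        ∃ y : Fin (m+1) → ℝ, ∀ j, ∑ i, a j i * x i + ∑ i, e j i * y i ≤ b j} =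
        {x : Fin n → ℝ |
        ∃ y : Fin m → ℝ, ∀ j', ∑ i, a'' j' i * x i + ∑ i, e'' j' i * y i ≤ b'' j'} := by
      ext x
      simp only [Set.mem_setOf_eq]
      have hsum : ∀ (j : J) (y : Fin (m+1) → ℝ),
          ∑ i, e j i * y i = ∑ i, e' j i * (Fin.init y) i + c j * y (Fin.last m) := by
        intro j y
        rw [Fin.sum_univ_castSucc]
        rfl
      have step1 : (∃ y : Fin (m+1) → ℝ, ∀ j, ∑ i, a j i * x i + ∑ i, e j i * y i ≤ b j)
          ↔ (∃ y' : Fin m → ℝ, ∃ t : ℝ,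
              ∀ j, (∑ i, a j i * x i + ∑ i, e' j i * y' i) + c j * t ≤ b j) := by
        constructor
        · rintro ⟨y, hy⟩
          refine ⟨Fin.init y, y (Fin.last m), fun j => ?_⟩
          have := hy j
          rw [hsum] at this
          linarith
        · rintro ⟨y', t, h⟩
          refine ⟨Fin.snoc y' t, fun j => ?_⟩
          rw [hsum]
          simp only [Fin.init_snoc, Fin.snoc_last]
          linarith [h j]
      rw [step1]
      apply exists_congr
      intro y'
      rw [FM_exists]
      constructor
      · rintro ⟨h0, hpq⟩ (j | ⟨p, q⟩)
        · by_cases hcj : c j = 0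
          · simpa [ha'', he'', hb'', hcj] using h0 j hcj
          · simp [ha'', he'', hb'', hcj]
        · by_cases hcond : 0 < c p ∧ c q < 0
          · have := hpq p q hcond.1 hcond.2
            simp only [ha'', he'', hb'', hcond, and_self, if_true]
            rw [sum_comb, sum_comb]
            linarith
          · simp [ha'', he'', hb'', hcond]
      · intro h
        constructor
        · intro j hcj
          have := h (.inl j)
          simpa [ha'', he'', hb'', hcj] using this
        · intro p q hp hq
          have := h (.inr (p, q))
          simp only [ha'', he'', hb'', hp, hq, and_self, if_true] at this
          rw [sum_comb, sum_comb] at this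
          linarith
    rw [hset]
    exact ih (J ⊕ J × J) inferInstance a'' e'' b''

theorem snoc_sum' {n : ℕ} (v : Fin n → ℝ) (r : ℝ) (w : Fin (n+1) → ℝ) :
    ∑ i : Fin (n+1), (Fin.snoc v r : Fin (n+1) → ℝ) i * w i
      = ∑ i : Fin n, v i * w i.castSucc + r * w (Fin.last n) := by
  rw [Fin.sum_univ_castSucc]
  simp

/-- Least upper bound in the domain of convex polyhedra (poly-hull): the closure
of the convex hull of `P ∪ Q` is a polyhedron containing both `P` and `Q`, and it
is contained in every polyhedron containing both `P` and `Q`. -/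
theorem polyhull_lub (n : ℕ) (P Q : Set (Fin n → ℝ))
    (hP : IsPolyhedron P) (hQ : IsPolyhedron Q) :
    IsPolyhedron (closure (convexHull ℝ (P ∪ Q))) ∧
    P ⊆ closure (convexHull ℝ (P ∪ Q)) ∧
    Q ⊆ closure (convexHull ℝ (P ∪ Q)) ∧
    ∀ R : Set (Fin n → ℝ), IsPolyhedron R → P ⊆ R → Q ⊆ R →
      closure (convexHull ℝ (P ∪ Q)) ⊆ R := by
  classical
  refine ⟨?_, ?_, ?_, ?_⟩
  case refine_2 =>
    exact Set.subset_union_left.trans ((subset_convexHull ℝ _).trans subset_closure)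
  case refine_3 =>
    exact Set.subset_union_right.trans ((subset_convexHull ℝ _).trans subset_closure)
  case refine_4 =>
    intro R hR hPR hQR
    exact closure_minimal (convexHull_min (Set.union_subset hPR hQR) (poly_convex hR))
      (poly_closed hR)
  case refine_1 =>
    by_cases hPe : P = ∅
    · have : closure (convexHull ℝ (P ∪ Q)) = Q := by
        rw [hPe, Set.empty_union, (poly_convex hQ).convexHull_eq,
          (poly_closed hQ).closure_eq]
      rw [this]; exact hQ
    by_cases hQe : Q = ∅
    · have : closure (convexHull ℝ (P ∪ Q)) = P := by
        rw [hQe, Set.union_empty, (poly_convex hP).convexHull_eq,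
          (poly_closed hP).closure_eq]
      rw [this]; exact hP
    obtain ⟨p0, hp0⟩ := Set.nonempty_iff_ne_empty.mpr hPe
    obtain ⟨q0, hq0⟩ := Set.nonempty_iff_ne_empty.mpr hQe
    obtain ⟨J, instJ, a, b, hPeq⟩ := hP
    obtain ⟨K, instK, cc, d, hQeq⟩ := hQ
    have hPmem : ∀ {x}, x ∈ P ↔ ∀ j, ∑ i, a j i * x i ≤ b j := by
      intro x; rw [hPeq]; simp [Set.mem_iInter]
    have hQmem : ∀ {x}, x ∈ Q ↔ ∀ k, ∑ i, cc k i * x i ≤ d k := by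
      intro x; rw [hQeq]; simp [Set.mem_iInter]
    -- index type for the lifted system
    set I : Type := (J ⊕ K) ⊕ Bool with hI
    set A : I → Fin n → ℝ := fun idx => match idx with
      | .inl (.inl _) => 0
      | .inl (.inr k) => cc k
      | .inr _ => 0 with hA
    set E : I → Fin (n+1) → ℝ := fun idx => match idx with
      | .inl (.inl j) => Fin.snoc (a j) (-b j)
      | .inl (.inr k) => Fin.snoc (fun i => -cc k i) (d k)
      | .inr false => Fin.snoc 0 (-1)
      | .inr true => Fin.snoc 0 1 with hE
    set β : I → ℝ := fun idx => match idx with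
      | .inl (.inl _) => 0
      | .inl (.inr k) => d k
      | .inr false => 0
      | .inr true => 1 with hβ
    set S : Set (Fin n → ℝ) := {x : Fin n → ℝ |
      ∃ w : Fin (n+1) → ℝ, ∀ idx, ∑ i, A idx i * x i + ∑ i, E idx i * w i ≤ β idx}
      with hS
    have hSpoly : IsPolyhedron S := proj_poly n (n+1) I inferInstance A E β
    -- P ⊆ S
    have hPS : P ⊆ S := by
      intro x hx
      refine ⟨Fin.snoc x 1, ?_⟩
      rintro ((j | k) | (_ | _)) <;>
        simp only [hA, hE, hβ, snoc_sum', Pi.zero_apply, zero_mul, Finset.sum_const_zero,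
          Fin.snoc_castSucc, Fin.snoc_last, neg_mul, mul_one]
      · linarith [hPmem.mp hx j]
      · have : ∑ i, (-cc k i) * x i = -∑ i, cc k i * x i := by
          simp [neg_mul]
        simp only [neg_mul] at this ⊢
        linarith
      · linarith
      · linarith
    -- Q ⊆ S
    have hQS : Q ⊆ S := by
      intro x hx
      refine ⟨Fin.snoc 0 0, ?_⟩
      rintro ((j | k) | (_ | _)) <;>
        simp only [hA, hE, hβ, snoc_sum', Pi.zero_apply, zero_mul, mul_zero,
          Finset.sum_const_zero, Fin.snoc_castSucc, Fin.snoc_last, neg_mul, mul_one]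
      · linarith
      · linarith [hQmem.mp hx k]
      · linarith
      · linarith
    -- S ⊆ closure (convexHull ℝ (P ∪ Q))
    have hSK : S ⊆ closure (convexHull ℝ (P ∪ Q)) := by
      rintro x ⟨w, hw⟩
      set y : Fin n → ℝ := fun i => w i.castSucc with hy
      set lam : ℝ := w (Fin.last n) with hlam
      have hAy : ∀ j, ∑ i, a j i * y i ≤ lam * b j := by
        intro j
        have := hw (.inl (.inl j))
        simp only [hA, hE, hβ, snoc_sum', Pi.zero_apply, zero_mul,
          Finset.sum_const_zero, neg_mul] at this
        simp only [hy, hlam]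
        linarith
      have hCz : ∀ k, ∑ i, cc k i * x i - ∑ i, cc k i * y i ≤ (1 - lam) * d k := by
        intro k
        have := hw (.inl (.inr k))
        simp only [hA, hE, hβ, snoc_sum', neg_mul] at this
        have hneg : ∑ i, -(cc k i * w i.castSucc) = -∑ i, cc k i * (w i.castSucc) := by
          simp
        rw [hneg] at this
        simp only [hy, hlam]
        linarith
      have hlam0 : 0 ≤ lam := by
        have := hw (.inr false)
        simp only [hA, hE, hβ, snoc_sum', Pi.zero_apply, zero_mul,
          Finset.sum_const_zero, neg_mul, one_mul] at this
        simp only [hlam]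
        linarith
      have hlam1 : lam ≤ 1 := by
        have := hw (.inr true)
        simp only [hA, hE, hβ, snoc_sum', Pi.zero_apply, zero_mul,
          Finset.sum_const_zero, one_mul] at this
        simp only [hlam]
        linarith
      -- approximating sequence
      set s : ℕ → ℝ := fun m => 1 / (m + 1 : ℝ) with hs
      have hs0 : ∀ m, 0 < s m := fun m => by positivity
      have hs1 : ∀ m, s m ≤ 1 := by
        intro m
        rw [hs]
        rw [div_le_one (by positivity)]
        norm_num
      set f : ℕ → Fin n → ℝ := fun m =>
        (1 - s m) • x + (s m / 2) • (p0 + q0) with hf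
      have hmem : ∀ m, f m ∈ convexHull ℝ (P ∪ Q) := by
        intro m
        have hσ0 := hs0 m
        have hσ1 := hs1 m
        set σ := s m with hσ
        set μ : ℝ := (1 - σ) * lam + σ / 2 with hμ
        set ν : ℝ := (1 - σ) * (1 - lam) + σ / 2 with hν
        have hμpos : 0 < μ := by rw [hμ]; nlinarith
        have hνpos : 0 < ν := by rw [hν]; nlinarith
        have hμν : μ + ν = 1 := by rw [hμ, hν]; ring
        set u1 : Fin n → ℝ := μ⁻¹ • ((1 - σ) • y + (σ / 2) • p0) with hu1
        set u2 : Fin n → ℝ := ν⁻¹ • ((1 - σ) • (x - y) + (σ / 2) • q0) with hu2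
        have hu1P : u1 ∈ P := by
          rw [hPmem]
          intro j
          have hsum : ∑ i, a j i * u1 i
              = μ⁻¹ * ((1 - σ) * (∑ i, a j i * y i) + (σ / 2) * (∑ i, a j i * p0 i)) := by
            rw [← sum_comb']
            rw [Finset.mul_sum]
            refine Finset.sum_congr rfl fun i _ => ?_
            simp [hu1, Pi.smul_apply, Pi.add_apply, smul_eq_mul]
            ring
          rw [hsum]
          have h1 : (1 - σ) * (∑ i, a j i * y i) + (σ / 2) * (∑ i, a j i * p0 i)
              ≤ μ * b j := by
            have e1 := mul_le_mul_of_nonneg_left (hAy j) (by linarith : (0:ℝ) ≤ 1 - σ)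
            have e2 := mul_le_mul_of_nonneg_left (hPmem.mp hp0 j) (by linarith : (0:ℝ) ≤ σ / 2)
            rw [hμ]; nlinarith
          calc μ⁻¹ * ((1 - σ) * (∑ i, a j i * y i) + (σ / 2) * (∑ i, a j i * p0 i))
              ≤ μ⁻¹ * (μ * b j) := by
                exact mul_le_mul_of_nonneg_left h1 (by positivity)
            _ = b j := by rw [← mul_assoc, inv_mul_cancel₀ hμpos.ne', one_mul]
        have hu2Q : u2 ∈ Q := by
          rw [hQmem]
          intro k
          have hsum : ∑ i, cc k i * u2 i
              = ν⁻¹ * ((1 - σ) * (∑ i, cc k i * x i - ∑ i, cc k i * y i)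
                + (σ / 2) * (∑ i, cc k i * q0 i)) := by
            rw [← Finset.sum_sub_distrib, Finset.mul_sum, Finset.mul_sum,
              ← Finset.sum_add_distrib, Finset.mul_sum]
            refine Finset.sum_congr rfl fun i _ => ?_
            simp only [hu2, Pi.smul_apply, Pi.add_apply, Pi.sub_apply, smul_eq_mul]
            ring
          rw [hsum]
          have h1 : (1 - σ) * (∑ i, cc k i * x i - ∑ i, cc k i * y i)
              + (σ / 2) * (∑ i, cc k i * q0 i) ≤ ν * d k := by
            have e1 := mul_le_mul_of_nonneg_left (hCz k) (by linarith : (0:ℝ) ≤ 1 - σ)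
            have e2 := mul_le_mul_of_nonneg_left (hQmem.mp hq0 k) (by linarith : (0:ℝ) ≤ σ / 2)
            rw [hν]; nlinarith
          calc ν⁻¹ * ((1 - σ) * (∑ i, cc k i * x i - ∑ i, cc k i * y i)
                + (σ / 2) * (∑ i, cc k i * q0 i))
              ≤ ν⁻¹ * (ν * d k) := mul_le_mul_of_nonneg_left h1 (by positivity)
            _ = d k := by rw [← mul_assoc, inv_mul_cancel₀ hνpos.ne', one_mul]
        have hcomb : μ • u1 + ν • u2 = f m := by
          rw [hu1, hu2, smul_smul, smul_smul, mul_inv_cancel₀ hμpos.ne',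
            mul_inv_cancel₀ hνpos.ne', one_smul, one_smul, hf]
          funext i
          simp only [Pi.add_apply, Pi.smul_apply, Pi.sub_apply, smul_eq_mul, hσ]
          ring
        rw [← hcomb]
        exact (convex_convexHull ℝ (P ∪ Q))
          ((subset_convexHull ℝ _) (Set.mem_union_left _ hu1P))
          ((subset_convexHull ℝ _) (Set.mem_union_right _ hu2Q))
          hμpos.le hνpos.le hμν
      have htend : Filter.Tendsto f Filter.atTop (nhds x) := by
        rw [hf]
        have hstend : Filter.Tendsto s Filter.atTop (nhds 0) := by
          rw [hs]
          exact tendsto_one_div_add_atTop_nhds_zero_nat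
        have h1 : Filter.Tendsto (fun m => (1 - s m) • x + (s m / 2) • (p0 + q0))
            Filter.atTop (nhds ((1 - (0:ℝ)) • x + ((0:ℝ) / 2) • (p0 + q0))) := by
          exact (((tendsto_const_nhds.sub hstend).smul tendsto_const_nhds).add
            ((hstend.div_const 2).smul tendsto_const_nhds))
        simpa using h1
      exact mem_closure_of_tendsto htend (Filter.Eventually.of_forall hmem)
    have heq : closure (convexHull ℝ (P ∪ Q)) = S := by
      apply Set.Subset.antisymm
      · exact closure_minimal
          (convexHull_min (Set.union_subset hPS hQS) (poly_convex hSpoly))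
          (poly_closed hSpoly)
      · exact hSK
    rw [heq]
    exact hSpoly
end
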